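/- arXiv:2307.09467 — 6 statements merged into one kernel-verified Lean document; each statement's English description precedes it below -/
import Mathlib

section
/- The rule F_{1,p} satisfies p-disjoint equality: for disjoint ballots b and b', F_{1,p}(θ_p^b + θ_p^{b'}) = {{c} : c ∈ b ∪ b'}. -/
open scoped ENNReal BigOperators

/-- Normalizer `|b|^{1/p}` for `p ∈ [1,∞]` (for `p = ∞` this is `|b|^0 = 1`). -/
noncomputable def wt (p : ℝ≥0∞) (card : ℕ) : ℝ := (card : ℝ) ^ (1 / p).toReal

/-- Score of candidate `c` under profile `π`: `Σ_b π(b)·1[c∈b]/|b|^{1/p}`. -/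
noncomputable def score {C : Type*} [Fintype C] [DecidableEq C]
    (p : ℝ≥0∞) (π : Finset C → ℝ) (c : C) : ℝ :=
  ∑ b : Finset C, if c ∈ b then π b / wt p b.card else 0

/-- `F_{k,p}(π)`: size-`k` committees maximizing the total score of their members. -/
noncomputable def Fkp {C : Type*} [Fintype C] [DecidableEq C]
    (k : ℕ) (p : ℝ≥0∞) (π : Finset C → ℝ) : Set (Finset C) :=
  {K | K.card = k ∧ ∀ K' : Finset C, K'.card = k →
    ∑ c ∈ K', score p π c ≤ ∑ c ∈ K, score p π c}

/-- A profile assigns nonnegative reals to ballots (nonempty subsets of `C`),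
with value `0` on the empty set. -/
def IsProfile {C : Type*} (π : Finset C → ℝ) : Prop :=
  (∀ b, 0 ≤ π b) ∧ π ∅ = 0

/-- The single-ballot profile `π^b`. -/
noncomputable def singleProfile {C : Type*} [DecidableEq C] (b : Finset C) : Finset C → ℝ :=
  fun b' => if b' = b then 1 else 0

/-- The unit score ballot profile `θ_p^b = |b|^{1/p} · π^b`. -/
noncomputable def theta {C : Type*} [DecidableEq C] (p : ℝ≥0∞) (b : Finset C) :
    Finset C → ℝ :=
  fun b' => if b' = b then wt p b.card else 0

/-- Consistency of a voting rule. -/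
def Consistent {C : Type*} (F : (Finset C → ℝ) → Set (Finset C)) : Prop :=
  ∀ π π' : Finset C → ℝ, IsProfile π → IsProfile π' →
    (F π ∩ F π').Nonempty → F (π + π') = F π ∩ F π'

/-- `p`-cancellation of a voting rule (with committee size `k`). -/
def Cancellative {C : Type*} [Fintype C] [DecidableEq C]
    (k : ℕ) (p : ℝ≥0∞) (F : (Finset C → ℝ) → Set (Finset C)) : Prop :=
  ∀ π : Finset C → ℝ, IsProfile π → (∀ c c' : C, score p π c = score p π c') →
    F π = {K : Finset C | K.card = k}

/-- Positive scaling of a voting rule. -/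
def PosScaling {C : Type*} (F : (Finset C → ℝ) → Set (Finset C)) : Prop :=
  ∀ (π : Finset C → ℝ) (ℓ : ℝ), IsProfile π → 0 < ℓ → F (fun b => ℓ * π b) = F π


lemma wt_pos (p : ℝ≥0∞) {n : ℕ} (hn : 0 < n) : 0 < wt p n := by
  unfold wt
  exact Real.rpow_pos_of_pos (by exact_mod_cast hn) _

lemma score_add {C : Type*} [Fintype C] [DecidableEq C]
    (p : ℝ≥0∞) (π π' : Finset C → ℝ) (c : C) :
    score p (π + π') c = score p π c + score p π' c := by
  unfold score
  rw [← Finset.sum_add_distrib]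
  refine Finset.sum_congr rfl fun x _ => ?_
  by_cases h : c ∈ x <;> simp [h, Pi.add_apply, add_div]

lemma score_theta {C : Type*} [Fintype C] [DecidableEq C]
    (p : ℝ≥0∞) (b : Finset C) (hb : b.Nonempty) (c : C) :
    score p (theta p b) c = if c ∈ b then 1 else 0 := by
  unfold score theta
  rw [Finset.sum_eq_single b]
  · have hw : wt p b.card ≠ 0 := (wt_pos p (Finset.card_pos.mpr hb)).ne'
    by_cases h : c ∈ b <;> simp [h, div_self hw]
  · intro x _ hx
    by_cases h : c ∈ x <;> simp [h, hx]
  · simp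

theorem stmt7 {C : Type*} [Fintype C] [DecidableEq C]
    (p : ℝ≥0∞) (hp : 1 ≤ p)
    (b b' : Finset C) (hb : b.Nonempty) (hb' : b'.Nonempty)
    (hdisj : Disjoint b b') :
    Fkp 1 p (theta p b + theta p b') = {K : Finset C | ∃ c ∈ b ∪ b', K = {c}} := by
  have hsc : ∀ c : C, score p (theta p b + theta p b') c
      = (if c ∈ b then (1:ℝ) else 0) + (if c ∈ b' then (1:ℝ) else 0) := by
    intro c
    rw [score_add, score_theta p b hb, score_theta p b' hb']
  have hle : ∀ c : C, score p (theta p b + theta p b') c ≤ 1 := by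
    intro c
    rw [hsc c]
    by_cases h : c ∈ b
    · have : c ∉ b' := fun h' => (Finset.disjoint_left.mp hdisj h) h'
      simp [h, this]
    · by_cases h' : c ∈ b' <;> simp [h, h']
  have hmem : ∀ c : C, c ∈ b ∪ b' → score p (theta p b + theta p b') c = 1 := by
    intro c hc
    rw [hsc c]
    rcases Finset.mem_union.mp hc with h | h
    · have : c ∉ b' := fun h' => (Finset.disjoint_left.mp hdisj h) h'
      simp [h, this]
    · have : c ∉ b := fun h' => (Finset.disjoint_left.mp hdisj h') h
      simp [h, this]
  have hnotmem : ∀ c : C, c ∉ b ∪ b' → score p (theta p b + theta p b') c = 0 := by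
    intro c hc
    rw [Finset.mem_union] at hc
    push_neg at hc
    rw [hsc c]
    simp [hc.1, hc.2]
  obtain ⟨c₀, hc₀⟩ := hb
  have hc₀u : c₀ ∈ b ∪ b' := Finset.mem_union_left _ hc₀
  ext K
  constructor
  · rintro ⟨hcard, hopt⟩
    obtain ⟨c, rfl⟩ := Finset.card_eq_one.mp hcard
    refine ⟨c, ?_, rfl⟩
    by_contra hc
    have h1 := hopt {c₀} (Finset.card_singleton _)
    rw [Finset.sum_singleton, Finset.sum_singleton, hmem c₀ hc₀u, hnotmem c hc] at h1
    linarith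
  · rintro ⟨c, hc, rfl⟩
    refine ⟨Finset.card_singleton _, fun K' hK' => ?_⟩
    obtain ⟨c', rfl⟩ := Finset.card_eq_one.mp hK'
    rw [Finset.sum_singleton, Finset.sum_singleton, hmem c hc]
    exact hle c'
end

section
/- F_{k,p} is utility maximizing with respect to U(b,K) = U_0 + (α|b∩K| + β|b∖K|)/|b|^{1/p} whenever α > β: for every profile π, F_{k,p}(π) = argmax over size-k committees K of Σ_b π(b)·U(b,K). -/
open scoped ENNReal BigOperators

/-- Utility `U(b,K) = U₀ + (α|b∩K| + β|b∖K|)/|b|^{1/p}`. -/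
noncomputable def util {C : Type*} [DecidableEq C] (p : ℝ≥0∞) (U₀ α β : ℝ)
    (b K : Finset C) : ℝ :=
  U₀ + (α * ((b ∩ K).card : ℝ) + β * ((b \ K).card : ℝ)) / wt p b.card

theorem stmt9 {C : Type*} [Fintype C] [DecidableEq C]
    (k : ℕ) (hk : 1 ≤ k) (hkn : k ≤ Fintype.card C)
    (p : ℝ≥0∞) (hp : 1 ≤ p)
    (U₀ α β : ℝ) (hαβ : β < α)
    (π : Finset C → ℕ) (hπ0 : π ∅ = 0) :
    Fkp k p (fun b => (π b : ℝ)) =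
      {K : Finset C | K.card = k ∧ ∀ K' : Finset C, K'.card = k →
        ∑ b : Finset C, (π b : ℝ) * util p U₀ α β b K' ≤
          ∑ b : Finset C, (π b : ℝ) * util p U₀ α β b K} := by
  have key : ∀ K : Finset C,
      ∑ b : Finset C, (π b : ℝ) * util p U₀ α β b K =
        (∑ b : Finset C, ((π b : ℝ) * U₀ + β * (π b : ℝ) * (b.card : ℝ) / wt p b.card))
          + (α - β) * ∑ c ∈ K, score p (fun b => (π b : ℝ)) c := by
    intro K
    unfold score
    rw [Finset.sum_comm, Finset.mul_sum, ← Finset.sum_add_distrib]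
    refine Finset.sum_congr rfl ?_
    intro b _
    have hsum : ∑ c ∈ K, (if c ∈ b then (π b : ℝ) / wt p b.card else 0)
        = ((K ∩ b).card : ℝ) * ((π b : ℝ) / wt p b.card) := by
      rw [Finset.sum_ite_mem, Finset.sum_const, nsmul_eq_mul]
    rw [hsum]
    have hcard : ((b \ K).card : ℝ) = (b.card : ℝ) - ((b ∩ K).card : ℝ) := by
      have := Finset.card_sdiff_add_card_inter b K
      push_cast [← this]
      ring
    have hKb : ((K ∩ b).card : ℝ) = ((b ∩ K).card : ℝ) := by
      rw [Finset.inter_comm]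
    rw [util, hcard, hKb, div_eq_mul_inv, div_eq_mul_inv, div_eq_mul_inv]
    ring
  ext K
  simp only [Fkp, Set.mem_setOf_eq]
  constructor
  · rintro ⟨hc, hmax⟩
    refine ⟨hc, fun K' hK' => ?_⟩
    rw [key K, key K']
    have := hmax K' hK'
    have hpos : (0:ℝ) < α - β := sub_pos.mpr hαβ
    nlinarith [hmax K' hK']
  · rintro ⟨hc, hmax⟩
    refine ⟨hc, fun K' hK' => ?_⟩
    have := hmax K' hK'
    rw [key K, key K'] at this
    have hpos : (0:ℝ) < α - β := sub_pos.mpr hαβ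
    nlinarith
end

section
/- F_{k,p} is a maximum likelihood estimator for the noise model P(K,b) proportional to α^{|b∩K|/|b|^{1/p}}·β^{|b∖K|/|b|^{1/p}} when α > β > 0: for every profile π, F_{k,p}(π) = argmax over size-k committees K of Π_b P(K,b)^{π(b)}. -/
open scoped ENNReal BigOperators

/-- Noise model `P(K,b) = α^{|b∩K|/|b|^{1/p}} · β^{|b∖K|/|b|^{1/p}}`. -/
noncomputable def noise {C : Type*} [DecidableEq C] (p : ℝ≥0∞) (α β : ℝ)
    (K b : Finset C) : ℝ :=
  α ^ (((b ∩ K).card : ℝ) / wt p b.card) * β ^ (((b \ K).card : ℝ) / wt p b.card)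

theorem stmt10 {C : Type*} [Fintype C] [DecidableEq C]
    (k : ℕ) (hk : 1 ≤ k) (hkn : k ≤ Fintype.card C)
    (p : ℝ≥0∞) (hp : 1 ≤ p)
    (α β : ℝ) (hβ : 0 < β) (hαβ : β < α)
    (π : Finset C → ℕ) (hπ0 : π ∅ = 0) :
    Fkp k p (fun b => (π b : ℝ)) =
      {K : Finset C | K.card = k ∧ ∀ K' : Finset C, K'.card = k →
        ∏ b : Finset C, noise p α β K' b ^ π b ≤
          ∏ b : Finset C, noise p α β K b ^ π b} := by
  classical
  have hα : 0 < α := hβ.trans hαβ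
  have hnoise_pos : ∀ K b : Finset C, 0 < noise p α β K b := fun K b =>
    mul_pos (Real.rpow_pos_of_pos hα _) (Real.rpow_pos_of_pos hβ _)
  have hprod_pos : ∀ K : Finset C, 0 < ∏ b : Finset C, noise p α β K b ^ π b :=
    fun K => Finset.prod_pos fun b _ => pow_pos (hnoise_pos K b) _
  set S : Finset C → ℝ :=
    fun K => ∑ b : Finset C, (π b : ℝ) * ((b ∩ K).card : ℝ) / wt p b.card with hS
  have hscore : ∀ K : Finset C,
      ∑ c ∈ K, score p (fun b => (π b : ℝ)) c = S K := by
    intro K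
    unfold score
    rw [Finset.sum_comm]
    refine Finset.sum_congr rfl fun b _ => ?_
    rw [Finset.sum_ite_mem, Finset.sum_const, Finset.inter_comm]
    push_cast [nsmul_eq_mul]
    ring
  set T : ℝ := ∑ b : Finset C,
      (π b : ℝ) * ((b.card : ℝ) / wt p b.card) * Real.log β with hT
  have hlog : ∀ K : Finset C,
      Real.log (∏ b : Finset C, noise p α β K b ^ π b) =
        (Real.log α - Real.log β) * S K + T := by
    intro K
    rw [Real.log_prod (fun b _ => (pow_pos (hnoise_pos K b) _).ne')]
    have hterm : ∀ b : Finset C,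
        Real.log (noise p α β K b ^ π b) =
          (Real.log α - Real.log β) * ((π b : ℝ) * ((b ∩ K).card : ℝ) / wt p b.card)
            + (π b : ℝ) * ((b.card : ℝ) / wt p b.card) * Real.log β := by
      intro b
      rw [Real.log_pow]
      unfold noise
      rw [Real.log_mul (Real.rpow_pos_of_pos hα _).ne' (Real.rpow_pos_of_pos hβ _).ne',
        Real.log_rpow hα, Real.log_rpow hβ]
      have hcard : ((b \ K).card : ℝ) = (b.card : ℝ) - ((b ∩ K).card : ℝ) := by
        have := Finset.card_sdiff_add_card_inter b K
        push_cast [← this]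
        ring
      rw [hcard]
      ring
    rw [Finset.sum_congr rfl fun b _ => hterm b, Finset.sum_add_distrib,
      ← Finset.mul_sum]
  have key : ∀ K K' : Finset C,
      ((∏ b : Finset C, noise p α β K' b ^ π b ≤
        ∏ b : Finset C, noise p α β K b ^ π b) ↔ S K' ≤ S K) := by
    intro K K'
    rw [← Real.log_le_log_iff (hprod_pos K') (hprod_pos K), hlog, hlog,
      add_le_add_iff_right,
      mul_le_mul_iff_right₀ (sub_pos.mpr (Real.log_lt_log hβ hαβ))]
  ext K
  simp only [Fkp, Set.mem_setOf_eq]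
  refine and_congr_right fun _ => forall_congr' fun K' => imp_congr_right fun _ => ?_
  rw [hscore, hscore, key]
end

section
/- For any k ≥ 1, k,∞-approval voting is vote distance rationalizable with respect to the unanimity consensus class, using the metric d(v,v') = |v △ v'| (symmetric difference) on ballots: for every election E of m approval ballots, the set of size-k committees K minimizing min_{E'∈U_K} Σ_i d(v_i, v'_i) equals F_{k,∞}(E), and the minimal distance for committee K equals mk − Σ_{c∈K} s_∞(c), where s_∞(c) is the number of ballots containing c. -/
open scoped BigOperators symmDiff

/-- Approval score `s_∞(c)`: the number of ballots containing `c`. -/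
def appScore {C : Type*} [DecidableEq C] {m : ℕ} (E : Fin m → Finset C) (c : C) : ℕ :=
  (Finset.univ.filter (fun i => c ∈ E i)).card

/-- Minimal (symmetric-difference) distance from the election `E` to a unanimous
election in `U_K`, i.e. one all of whose ballots contain `K`. -/
noncomputable def minDistInfty {C : Type*} [Fintype C] [DecidableEq C] {m : ℕ}
    (E : Fin m → Finset C) (K : Finset C) : ℕ :=
  sInf {x : ℕ | ∃ E' : Fin m → Finset C,
    (∀ i, K ⊆ E' i ∧ (E' i).Nonempty) ∧ x = ∑ i, ((E i) ∆ (E' i)).card}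

lemma key_aux {C : Type*} [Fintype C] [DecidableEq C] {m : ℕ}
    (E : Fin m → Finset C) (K : Finset C) (hK : K.Nonempty) :
    minDistInfty E K + ∑ c ∈ K, appScore E c = m * K.card := by
  have hswap : ∑ c ∈ K, appScore E c = ∑ i, (K ∩ E i).card := by
    unfold appScore
    simp only [Finset.card_filter]
    rw [Finset.sum_comm]
    refine Finset.sum_congr rfl fun i _ => ?_
    rw [← Finset.card_filter, Finset.filter_mem_eq_inter]
  have hmin : minDistInfty E K = ∑ i, (K \ E i).card := by
    unfold minDistInfty
    apply le_antisymm
    · apply Nat.sInf_le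
      refine ⟨fun i => E i ∪ K, fun i => ⟨Finset.subset_union_right,
        hK.mono Finset.subset_union_right⟩, ?_⟩
      refine Finset.sum_congr rfl fun i _ => ?_
      congr 1
      ext a
      simp only [Finset.mem_symmDiff, Finset.mem_union, Finset.mem_sdiff]
      tauto
    · apply le_csInf
      · exact ⟨_, fun i => E i ∪ K, fun i => ⟨Finset.subset_union_right,
          hK.mono Finset.subset_union_right⟩, rfl⟩
      · rintro x ⟨E', hE', rfl⟩
        refine Finset.sum_le_sum fun i _ => Finset.card_le_card fun a ha => ?_
        simp only [Finset.mem_sdiff] at ha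
        simp only [Finset.mem_symmDiff]
        exact Or.inr ⟨(hE' i).1 ha.1, ha.2⟩
  have hsum : ∑ i, ((K \ E i).card + (K ∩ E i).card) = m * K.card := by
    rw [Finset.sum_congr rfl fun i _ => by
      rw [Nat.add_comm, Finset.card_inter_add_card_sdiff]]
    simp [Finset.sum_const, mul_comm]
  rw [hmin, hswap, ← Finset.sum_add_distrib, hsum]

theorem stmt13 {C : Type*} [Fintype C] [DecidableEq C]
    (k : ℕ) (hk : 1 ≤ k) (hkn : k ≤ Fintype.card C)
    {m : ℕ} (E : Fin m → Finset C) (hE : ∀ i, (E i).Nonempty) :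
    (∀ K : Finset C, K.card = k →
      minDistInfty E K = m * k - ∑ c ∈ K, appScore E c) ∧
    {K : Finset C | K.card = k ∧ ∀ K' : Finset C, K'.card = k →
        minDistInfty E K ≤ minDistInfty E K'} =
      {K : Finset C | K.card = k ∧ ∀ K' : Finset C, K'.card = k →
        ∑ c ∈ K', appScore E c ≤ ∑ c ∈ K, appScore E c} := by
  have hne : ∀ K : Finset C, K.card = k → K.Nonempty := fun K hKc =>
    Finset.card_pos.mp (hKc ▸ hk)
  have hkey : ∀ K : Finset C, K.card = k →
      minDistInfty E K + ∑ c ∈ K, appScore E c = m * k := fun K hKc => by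
    have := key_aux E K (hne K hKc); rwa [hKc] at this
  constructor
  · intro K hKc
    have := hkey K hKc
    omega
  · ext K
    simp only [Set.mem_setOf_eq]
    constructor
    · rintro ⟨hKc, h⟩
      refine ⟨hKc, fun K' hK' => ?_⟩
      have h1 := hkey K hKc
      have h2 := hkey K' hK'
      have := h K' hK'
      omega
    · rintro ⟨hKc, h⟩
      refine ⟨hKc, fun K' hK' => ?_⟩
      have h1 := hkey K hKc
      have h2 := hkey K' hK'
      have := h K' hK'
      omega
end

section
/- Let d be a metric on ballots and d̂ the induced (sum) metric on elections of length m. If U = ⟨u_1,...,u_m⟩ minimizes d̂(E, ·) over a set S of elections containing U, and Ẽ is obtained from E = ⟨v_1,...,v_m⟩ by replacing v_ℓ with u_ℓ, then U also minimizes d̂(Ẽ, ·) over S. -/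
open scoped BigOperators

/-- Induced (sum) distance between elections of length `m`. -/
noncomputable def dhat {I : Type*} [MetricSpace I] {m : ℕ} (E E' : Fin m → I) : ℝ :=
  ∑ i, dist (E i) (E' i)

lemma dhat_update {I : Type*} [MetricSpace I] {m : ℕ} (E V : Fin m → I) (ℓ : Fin m) (x : I) :
    dhat (Function.update E ℓ x) V = dhat E V - dist (E ℓ) (V ℓ) + dist x (V ℓ) := by
  unfold dhat
  rw [← Finset.add_sum_erase _ _ (Finset.mem_univ ℓ),
      ← Finset.add_sum_erase _ (fun i => dist (E i) (V i)) (Finset.mem_univ ℓ)]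
  have h : ∀ i ∈ Finset.univ.erase ℓ,
      dist (Function.update E ℓ x i) (V i) = dist (E i) (V i) := by
    intro i hi
    rw [Function.update_of_ne (Finset.mem_erase.mp hi).1]
  rw [Finset.sum_congr rfl h, Function.update_self]
  ring

theorem stmt16 {I : Type*} [MetricSpace I] {m : ℕ}
    (S : Set (Fin m → I)) (E U : Fin m → I)
    (hU : U ∈ S) (hmin : ∀ V ∈ S, dhat E U ≤ dhat E V)
    (ℓ : Fin m) :
    ∀ V ∈ S, dhat (Function.update E ℓ (U ℓ)) U ≤ dhat (Function.update E ℓ (U ℓ)) V := by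
  intro V hV
  rw [dhat_update, dhat_update]
  have h1 := hmin V hV
  have h2 : dist (E ℓ) (V ℓ) ≤ dist (E ℓ) (U ℓ) + dist (U ℓ) (V ℓ) := dist_triangle _ _ _
  have h3 : dist (U ℓ) (U ℓ) = 0 := dist_self _
  linarith
end

section
/- For any p ∈ [1,∞) and any k > 1 (with at least k+1 candidates), k,p-approval voting is not vote distance rationalizable with respect to the unanimity consensus class: there is no metric d on ballots such that for every election E, F_{k,p}(E) equals the set of size-k committees K minimizing min_{E'∈U_K} Σ_i d(v_i, v'_i). -/
open scoped BigOperators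

/-- Score `s_p(c,E) = Σ_i 1[c∈v_i]/|v_i|^{1/p}` for finite `p`. -/
noncomputable def eScore {C : Type*} [DecidableEq C] (p : ℝ)
    {m : ℕ} (E : Fin m → Finset C) (c : C) : ℝ :=
  ∑ i, if c ∈ E i then (((E i).card : ℝ) ^ (1 / p))⁻¹ else 0

/-- Minimal distance (coordinatewise sum of `d`) from election `E` to an election in
`U_K`, i.e. one all of whose ballots are nonempty and contain `K`. -/
noncomputable def minDistTo {C : Type*} [Fintype C] [DecidableEq C]
    (d : Finset C → Finset C → ℝ) {m : ℕ} (E : Fin m → Finset C) (K : Finset C) : ℝ :=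
  sInf {x : ℝ | ∃ E' : Fin m → Finset C,
    (∀ i, K ⊆ E' i ∧ (E' i).Nonempty) ∧ x = ∑ i, d (E i) (E' i)}

/-- `d` is a metric on the set of nonempty ballots. -/
def IsBallotMetric {C : Type*} (d : Finset C → Finset C → ℝ) : Prop :=
  (∀ a b : Finset C, a.Nonempty → b.Nonempty → d a b = d b a) ∧
  (∀ a : Finset C, a.Nonempty → d a a = 0) ∧
  (∀ a b : Finset C, a.Nonempty → b.Nonempty → a ≠ b → 0 < d a b) ∧
  (∀ a b c : Finset C, a.Nonempty → b.Nonempty → c.Nonempty → d a c ≤ d a b + d b c)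

section AuxStmt17

variable {C : Type*} [Fintype C] [DecidableEq C]

lemma aux_set_finite17 (d : Finset C → Finset C → ℝ) {m : ℕ} (E : Fin m → Finset C) (K : Finset C) :
    {x : ℝ | ∃ E' : Fin m → Finset C,
      (∀ i, K ⊆ E' i ∧ (E' i).Nonempty) ∧ x = ∑ i, d (E i) (E' i)}.Finite := by
  have h : {x : ℝ | ∃ E' : Fin m → Finset C,
      (∀ i, K ⊆ E' i ∧ (E' i).Nonempty) ∧ x = ∑ i, d (E i) (E' i)} =
      (fun E' : Fin m → Finset C => ∑ i, d (E i) (E' i)) ''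
        {E' | ∀ i, K ⊆ E' i ∧ (E' i).Nonempty} := by
    ext x
    simp only [Set.mem_setOf_eq, Set.mem_image]
    constructor
    · rintro ⟨E', h1, rfl⟩; exact ⟨E', h1, rfl⟩
    · rintro ⟨E', h1, rfl⟩; exact ⟨E', h1, rfl⟩
  rw [h]
  exact (Set.toFinite _).image _

lemma aux_minDistTo_le17 (d : Finset C → Finset C → ℝ) {m : ℕ} (E : Fin m → Finset C)
    (K : Finset C) (E' : Fin m → Finset C) (h : ∀ i, K ⊆ E' i ∧ (E' i).Nonempty) :
    minDistTo d E K ≤ ∑ i, d (E i) (E' i) :=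
  csInf_le (aux_set_finite17 d E K).bddBelow ⟨E', h, rfl⟩

lemma aux_minDistTo_attained17 (d : Finset C → Finset C → ℝ) {m : ℕ} (E : Fin m → Finset C)
    {K : Finset C} (hK : K.Nonempty) :
    ∃ E' : Fin m → Finset C, (∀ i, K ⊆ E' i ∧ (E' i).Nonempty) ∧
      minDistTo d E K = ∑ i, d (E i) (E' i) := by
  have hne : {x : ℝ | ∃ E' : Fin m → Finset C,
      (∀ i, K ⊆ E' i ∧ (E' i).Nonempty) ∧ x = ∑ i, d (E i) (E' i)}.Nonempty :=
    ⟨∑ i, d (E i) K, fun _ => K, fun i => ⟨subset_rfl, hK⟩, rfl⟩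
  exact hne.csInf_mem (aux_set_finite17 d E K)

lemma aux_sum_if_lt17 (m1 m2 : ℕ) (x y : ℝ) :
    (∑ i : Fin (m1 + m2), if (i : ℕ) < m1 then x else y) = m1 * x + m2 * y := by
  rw [Fin.sum_univ_eq_sum_range (fun i => if i < m1 then x else y)]
  rw [Finset.range_eq_Ico, ← Finset.sum_Ico_consecutive _ (Nat.zero_le m1) (Nat.le_add_right m1 m2)]
  rw [Finset.sum_congr rfl (fun i hi => if_pos (by simp at hi; omega)),
    Finset.sum_congr rfl (g := fun _ => y) (fun i hi => if_neg (by simp at hi; omega))]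
  simp [Nat.card_Ico, mul_comm]

lemma aux_ballot_score17 (p : ℝ) (v X : Finset C) :
    (∑ c ∈ X, if c ∈ v then ((v.card : ℝ) ^ (1 / p))⁻¹ else 0)
      = ((v.card : ℝ) ^ (1 / p))⁻¹ * ((X ∩ v).card) := by
  rw [← Finset.sum_filter, Finset.filter_mem_eq_inter, Finset.sum_const, nsmul_eq_mul, mul_comm]

lemma aux_score_two_block17 (p : ℝ) (v1 v2 X : Finset C) (m1 m2 : ℕ) :
    (∑ c ∈ X, eScore p (fun i : Fin (m1 + m2) => if (i : ℕ) < m1 then v1 else v2) c)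
      = m1 * (((v1.card : ℝ) ^ (1 / p))⁻¹ * ((X ∩ v1).card))
        + m2 * (((v2.card : ℝ) ^ (1 / p))⁻¹ * ((X ∩ v2).card)) := by
  unfold eScore
  rw [Finset.sum_comm]
  rw [Finset.sum_congr rfl (g := fun i : Fin (m1+m2) =>
      if (i : ℕ) < m1 then ((v1.card : ℝ) ^ (1 / p))⁻¹ * ((X ∩ v1).card)
      else ((v2.card : ℝ) ^ (1 / p))⁻¹ * ((X ∩ v2).card)) ?_]
  · exact aux_sum_if_lt17 m1 m2 _ _
  · intro i _
    by_cases h : (i : ℕ) < m1 <;> simp only [h, if_true, if_false, reduceIte] <;>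
      exact aux_ballot_score17 p _ X

end AuxStmt17

set_option maxHeartbeats 1000000 in
/-- For `p < ∞` and `k > 1`, `k,p`-approval voting is not vote distance rationalizable
with respect to the unanimity consensus class. -/
theorem stmt17 {C : Type*} [Fintype C] [DecidableEq C]
    (k : ℕ) (hk : 1 < k) (hn : k + 1 ≤ Fintype.card C)
    (p : ℝ) (hp : 1 ≤ p) :
    ¬ ∃ d : Finset C → Finset C → ℝ, IsBallotMetric d ∧
      ∀ (m : ℕ) (E : Fin m → Finset C), (∀ i, (E i).Nonempty) →
        {K : Finset C | K.card = k ∧ ∀ K' : Finset C, K'.card = k →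
            ∑ c ∈ K', eScore p E c ≤ ∑ c ∈ K, eScore p E c} =
          {K : Finset C | K.card = k ∧ ∀ K' : Finset C, K'.card = k →
            minDistTo d E K ≤ minDistTo d E K'} := by
  rintro ⟨d, ⟨dsymm, drefl, dpos, dtri⟩, hiff⟩
  -- basic positivity facts
  have hp0 : 0 < p := lt_of_lt_of_le one_pos hp
  have hip : 0 < 1 / p := by positivity
  -- candidates
  obtain ⟨B, -, hBcard⟩ : ∃ B ⊆ (Finset.univ : Finset C), B.card = k + 1 :=
    Finset.exists_subset_card_eq (by simpa using hn)
  obtain ⟨a, ha⟩ : B.Nonempty := Finset.card_pos.mp (by omega)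
  set K : Finset C := B.erase a with hKdef
  have hKcard : K.card = k := by rw [hKdef, Finset.card_erase_of_mem ha, hBcard]; omega
  obtain ⟨o, ho⟩ : K.Nonempty := Finset.card_pos.mp (by omega)
  have hoB : o ∈ B := Finset.mem_of_mem_erase ho
  have hoa : o ≠ a := Finset.ne_of_mem_erase ho
  set K₁ : Finset C := B.erase o with hK₁def
  have hK₁card : K₁.card = k := by
    rw [hK₁def, Finset.card_erase_of_mem hoB, hBcard]; omega
  have haK₁ : a ∈ K₁ := Finset.mem_erase.mpr ⟨hoa.symm, ha⟩
  have haK : a ∉ K := Finset.notMem_erase a B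
  have hKne : K.Nonempty := ⟨o, ho⟩
  have hK₁ne : K₁.Nonempty := ⟨a, haK₁⟩
  set s : Finset C := {a} with hsdef
  have hsne : s.Nonempty := ⟨a, Finset.mem_singleton_self a⟩
  have hKK₁ : (K ∩ K₁).card = k - 1 := by
    have : K ∩ K₁ = K.erase o := by
      ext x
      simp only [Finset.mem_inter, hKdef, hK₁def, Finset.mem_erase]
      tauto
    rw [this, Finset.card_erase_of_mem ho, hKcard]
  have hKeK₁ : K ∩ K₁ ⊆ K₁ := Finset.inter_subset_right
  -- distance nonneg
  have dnonneg : ∀ x y : Finset C, x.Nonempty → y.Nonempty → 0 ≤ d x y := by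
    intro x y hx hy
    rcases eq_or_ne x y with rfl | h
    · exact (drefl x hx).ge
    · exact (dpos x y hx hy h).le
  -- single ballot "pseudo-distance" f
  set f : Finset C → Finset C → ℝ :=
    fun v X => minDistTo d (fun _ : Fin 1 => v) X with hfdef
  have hfle : ∀ v X w : Finset C, X ⊆ w → w.Nonempty → f v X ≤ d v w := by
    intro v X w hw hwne
    have := aux_minDistTo_le17 d (fun _ : Fin 1 => v) X (fun _ => w) (fun _ => ⟨hw, hwne⟩)
    simpa using this
  have hfatt : ∀ v X : Finset C, X.Nonempty →
      ∃ w : Finset C, X ⊆ w ∧ w.Nonempty ∧ f v X = d v w := by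
    intro v X hX
    obtain ⟨E', hE', heq⟩ := aux_minDistTo_attained17 d (fun _ : Fin 1 => v) hX
    exact ⟨E' 0, (hE' 0).1, (hE' 0).2, by simpa using heq⟩
  -- score weights
  set r : ℝ := (((k : ℕ) : ℝ) ^ (1 / p))⁻¹ with hrdef
  have hkR : (1 : ℝ) < (k : ℝ) := by exact_mod_cast hk
  have hkrpow : (1 : ℝ) < ((k : ℕ) : ℝ) ^ (1 / p) :=
    Real.one_lt_rpow_iff_of_pos (by positivity) |>.mpr (Or.inl ⟨hkR, hip⟩)
  have hrpos : 0 < r := by rw [hrdef]; positivity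
  have hr1 : r < 1 := by
    rw [hrdef]
    exact inv_lt_one_of_one_lt₀ hkrpow
  -- ===== Election 1 : single voter with ballot s = {a} =====
  have hsc₁ : ∀ X : Finset C, (∑ c ∈ X, eScore p (fun _ : Fin 1 => s) c)
      = if a ∈ X then (1 : ℝ) else 0 := by
    intro X
    unfold eScore
    have : ∀ c ∈ X, (∑ i : Fin 1, if c ∈ (fun _ : Fin 1 => s) i
        then ((((fun _ : Fin 1 => s) i).card : ℝ) ^ (1 / p))⁻¹ else 0)
        = if c = a then (1 : ℝ) else 0 := by
      intro c _
      rw [Fin.sum_univ_one]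
      simp [hsdef, Finset.mem_singleton, Real.one_rpow]
    rw [Finset.sum_congr rfl this, Finset.sum_ite_eq' X a (fun _ => (1 : ℝ))]
  have hE₁ne : ∀ i : Fin 1, ((fun _ : Fin 1 => s) i).Nonempty := fun _ => hsne
  have hset₁ := hiff 1 (fun _ : Fin 1 => s) hE₁ne
  set α : ℝ := f s K₁ with hαdef
  set A : ℝ := f s K with hAdef
  -- K₁ is a score winner
  have hK₁sc : K₁.card = k ∧ ∀ K' : Finset C, K'.card = k →
      ∑ c ∈ K', eScore p (fun _ : Fin 1 => s) c ≤ ∑ c ∈ K₁, eScore p (fun _ : Fin 1 => s) c := by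
    refine ⟨hK₁card, fun X hX => ?_⟩
    rw [hsc₁, hsc₁, if_pos haK₁]
    split <;> norm_num
  have hK₁dist : ∀ X : Finset C, X.card = k →
      minDistTo d (fun _ : Fin 1 => s) K₁ ≤ minDistTo d (fun _ : Fin 1 => s) X := by
    have := (Set.ext_iff.mp hset₁ K₁).mp hK₁sc
    exact this.2
  -- K is not a score winner
  have hKnsc : ¬ (K.card = k ∧ ∀ K' : Finset C, K'.card = k →
      ∑ c ∈ K', eScore p (fun _ : Fin 1 => s) c ≤ ∑ c ∈ K, eScore p (fun _ : Fin 1 => s) c) := by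
    intro hmem
    have := hmem.2 K₁ hK₁card
    rw [hsc₁, hsc₁, if_pos haK₁, if_neg haK] at this
    linarith
  have hαA : α < A := by
    have hKnd : ¬ (K.card = k ∧ ∀ K' : Finset C, K'.card = k →
        minDistTo d (fun _ : Fin 1 => s) K ≤ minDistTo d (fun _ : Fin 1 => s) K') :=
      fun hm => hKnsc ((Set.ext_iff.mp hset₁ K).mpr hm)
    simp only [not_and, not_forall] at hKnd
    obtain ⟨Y, hYcard, hY⟩ := hKnd hKcard
    have h1 : α ≤ minDistTo d (fun _ : Fin 1 => s) Y := hK₁dist Y hYcard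
    have h2 : minDistTo d (fun _ : Fin 1 => s) Y < A := lt_of_not_ge hY
    exact lt_of_le_of_lt h1 h2
  -- C₁ = f K K₁ > 0
  set C₁ : ℝ := f K K₁ with hC₁def
  obtain ⟨v₁, hv₁sub, hv₁ne, hv₁eq⟩ := hfatt K K₁ hK₁ne
  have hC₁pos : 0 < C₁ := by
    rw [hC₁def, hv₁eq]
    exact dpos K v₁ hKne hv₁ne (fun h => haK (h ▸ hv₁sub haK₁))
  -- ===== Step (b): C₁ ≤ r * (A - α) =====
  have key : ∀ m2 : ℕ, (m2 : ℝ) * C₁ ≤ (⌈(m2 : ℝ) * r⌉₊ : ℝ) * (A - α) := by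
    intro m2
    set m1 : ℕ := ⌈(m2 : ℝ) * r⌉₊ with hm1def
    have hm1r : (m2 : ℝ) * r ≤ m1 := Nat.le_ceil _
    set E : Fin (m1 + m2) → Finset C :=
      fun i => if (i : ℕ) < m1 then s else K with hEdef
    have hEne : ∀ i, (E i).Nonempty := by
      intro i; rw [hEdef]; dsimp only; split
      · exact hsne
      · exact hKne
    have hscE : ∀ X : Finset C, (∑ c ∈ X, eScore p E c)
        = m1 * (if a ∈ X then (1:ℝ) else 0) + m2 * (r * ((X ∩ K).card : ℝ)) := by
      intro X
      rw [hEdef]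
      rw [aux_score_two_block17 p s K X m1 m2]
      have h1 : ((s.card : ℝ) ^ (1 / p))⁻¹ = 1 := by
        rw [hsdef]; simp [Real.one_rpow]
      have h2 : ((X ∩ s).card : ℝ) = if a ∈ X then (1:ℝ) else 0 := by
        rw [hsdef]
        by_cases h : a ∈ X
        · rw [Finset.inter_singleton_of_mem h, if_pos h]; simp
        · rw [Finset.inter_singleton_of_notMem h, if_neg h]; simp
      rw [h1, h2, hKcard, ← hrdef]
      ring
    -- K₁ is a score winner of E
    have hK₁scE : K₁.card = k ∧ ∀ K' : Finset C, K'.card = k →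
        ∑ c ∈ K', eScore p E c ≤ ∑ c ∈ K₁, eScore p E c := by
      refine ⟨hK₁card, fun X hX => ?_⟩
      rw [hscE, hscE, if_pos haK₁]
      have hK₁K : ((K₁ ∩ K).card : ℝ) = (k : ℝ) - 1 := by
        rw [Finset.inter_comm, hKK₁]
        push_cast [Nat.cast_sub hk.le]
        ring
      rw [hK₁K]
      by_cases hax : a ∈ X
      · rw [if_pos hax]
        have hXK : ((X ∩ K).card : ℝ) ≤ (k : ℝ) - 1 := by
          have hsub : X ∩ K ⊆ X.erase a := by
            intro x hx
            rw [Finset.mem_erase]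
            exact ⟨fun h => haK (h ▸ (Finset.mem_inter.mp hx).2), (Finset.mem_inter.mp hx).1⟩
          have hle : (X ∩ K).card ≤ (X.erase a).card := Finset.card_le_card hsub
          rw [Finset.card_erase_of_mem hax, hX] at hle
          have : ((X ∩ K).card : ℝ) ≤ ((k - 1 : ℕ) : ℝ) := by exact_mod_cast hle
          rwa [Nat.cast_sub hk.le, Nat.cast_one] at this
        have : (m2 : ℝ) * (r * ((X ∩ K).card : ℝ)) ≤ m2 * (r * ((k:ℝ) - 1)) := by
          apply mul_le_mul_of_nonneg_left _ (Nat.cast_nonneg m2)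
          exact mul_le_mul_of_nonneg_left hXK hrpos.le
        linarith
      · rw [if_neg hax]
        have hXK : ((X ∩ K).card : ℝ) ≤ (k : ℝ) := by
          have : (X ∩ K).card ≤ k := hX ▸ Finset.card_le_card Finset.inter_subset_left
          exact_mod_cast this
        have h1 : (m2 : ℝ) * (r * ((X ∩ K).card : ℝ)) ≤ m2 * (r * (k:ℝ)) := by
          apply mul_le_mul_of_nonneg_left _ (Nat.cast_nonneg m2)
          exact mul_le_mul_of_nonneg_left hXK hrpos.le
        have h2 : (m2:ℝ) * (r * (k:ℝ)) = m2 * (r * ((k:ℝ)-1)) + m2 * r := by ring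
        have hm2r0 : (0:ℝ) ≤ m2 * r := by positivity
        nlinarith [hm1r]
    have hK₁dE : minDistTo d E K₁ ≤ minDistTo d E K := by
      have := (Set.ext_iff.mp (hiff (m1 + m2) E hEne) K₁).mp hK₁scE
      exact this.2 K hKcard
    -- upper bound on minDistTo E K
    obtain ⟨vA, hvAsub, hvAne, hvAeq⟩ := hfatt s K hKne
    have hub : minDistTo d E K ≤ (m1 : ℝ) * A := by
      have hle := aux_minDistTo_le17 d E K
        (fun i => if (i : ℕ) < m1 then vA else K)
        (by intro i; split
            · exact ⟨hvAsub, hvAne⟩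
            · exact ⟨subset_rfl, hKne⟩)
      have heq : (∑ i : Fin (m1+m2),
            d (E i) ((fun i : Fin (m1+m2) => if (i : ℕ) < m1 then vA else K) i))
          = m1 * (d s vA) + m2 * (d K K) := by
        rw [Finset.sum_congr rfl (g := fun i : Fin (m1+m2) =>
            if (i : ℕ) < m1 then d s vA else d K K)
          (by intro i _; rw [hEdef]; dsimp only; by_cases h : (i:ℕ) < m1 <;> simp [h])]
        exact aux_sum_if_lt17 m1 m2 _ _
      rw [heq] at hle
      rw [drefl K hKne] at hle
      calc minDistTo d E K ≤ m1 * d s vA + m2 * 0 := hle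
        _ = (m1 : ℝ) * d s vA := by ring
        _ = (m1 : ℝ) * A := by rw [← hvAeq]
    -- lower bound on minDistTo E K₁
    have hlb : (m1 : ℝ) * α + (m2 : ℝ) * C₁ ≤ minDistTo d E K₁ := by
      obtain ⟨E'', hE'', heq⟩ := aux_minDistTo_attained17 d E hK₁ne
      rw [heq]
      calc (m1:ℝ) * α + (m2:ℝ) * C₁
          = ∑ i : Fin (m1+m2), (if (i : ℕ) < m1 then α else C₁) :=
            (aux_sum_if_lt17 m1 m2 α C₁).symm
        _ ≤ ∑ i, d (E i) (E'' i) := by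
            apply Finset.sum_le_sum
            intro i _
            rw [hEdef]; dsimp only
            by_cases h : (i:ℕ) < m1
            · rw [if_pos h, if_pos h]
              exact hfle s K₁ (E'' i) (hE'' i).1 (hE'' i).2
            · rw [if_neg h, if_neg h]
              exact hfle K K₁ (E'' i) (hE'' i).1 (hE'' i).2
    have := le_trans hlb (le_trans hK₁dE hub)
    linarith
  have hbb : C₁ ≤ r * (A - α) := by
    by_contra hcon
    push_neg at hcon
    set ε : ℝ := C₁ - r * (A - α) with hεdef
    have hε : 0 < ε := by rw [hεdef]; linarith
    obtain ⟨n, hngt⟩ := exists_nat_gt ((A - α) / ε)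
    have hkey := key n
    have hceil : (⌈(n : ℝ) * r⌉₊ : ℝ) < (n : ℝ) * r + 1 :=
      Nat.ceil_lt_add_one (by positivity)
    have hAα : 0 < A - α := by linarith
    have h1 : (n : ℝ) * C₁ ≤ ((n : ℝ) * r + 1) * (A - α) := by
      calc (n : ℝ) * C₁ ≤ (⌈(n : ℝ) * r⌉₊ : ℝ) * (A - α) := hkey
        _ ≤ ((n : ℝ) * r + 1) * (A - α) := by nlinarith
    have h2 : (n : ℝ) * ε ≤ A - α := by
      rw [hεdef]; nlinarith
    have h3 : (A - α) / ε < (n : ℝ) := hngt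
    rw [div_lt_iff₀ hε] at h3
    linarith
  -- ===== Step (c)+(d): A - α ≤ C₁ =====
  obtain ⟨u, husub, hune, hueq⟩ := hfatt s K₁ hK₁ne
  set wu : ℝ := ((u.card : ℝ) ^ (1 / p))⁻¹ with hwudef
  have hwur : wu ≤ r := by
    have hcard : (k : ℝ) ≤ (u.card : ℝ) := by
      exact_mod_cast hK₁card ▸ Finset.card_le_card husub
    have hrp : ((k:ℕ):ℝ) ^ (1/p) ≤ ((u.card : ℕ):ℝ) ^ (1/p) :=
      Real.rpow_le_rpow (by positivity) hcard hip.le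
    rw [hwudef, hrdef]
    exact inv_anti₀ (by positivity) hrp
  have hwu0 : 0 ≤ wu := by rw [hwudef]; positivity
  -- election (u, K)
  set Ec : Fin (1 + 1) → Finset C := fun i => if (i : ℕ) < 1 then u else K with hEcdef
  have hEcne : ∀ i, (Ec i).Nonempty := by
    intro i; rw [hEcdef]; dsimp only; split
    · exact hune
    · exact hKne
  have hscEc : ∀ X : Finset C, (∑ c ∈ X, eScore p Ec c)
      = wu * ((X ∩ u).card : ℝ) + r * ((X ∩ K).card : ℝ) := by
    intro X
    rw [hEcdef, aux_score_two_block17 p u K X 1 1, ← hwudef, hKcard, ← hrdef]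
    push_cast
    ring
  -- K is a score winner of Ec
  have hKscEc : K.card = k ∧ ∀ K' : Finset C, K'.card = k →
      ∑ c ∈ K', eScore p Ec c ≤ ∑ c ∈ K, eScore p Ec c := by
    refine ⟨hKcard, fun X hX => ?_⟩
    rw [hscEc, hscEc]
    by_cases hXK : X = K
    · rw [hXK]
    · have hXKcard : ((X ∩ K).card : ℝ) ≤ (k : ℝ) - 1 := by
        have hle : (X ∩ K).card ≤ k := hKcard ▸ Finset.card_le_card Finset.inter_subset_right
        have hne : (X ∩ K).card ≠ k := by
          intro h
          have h1 : X ∩ K = K :=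
            Finset.eq_of_subset_of_card_le Finset.inter_subset_right (by omega)
          have h2 : K ⊆ X := h1 ▸ Finset.inter_subset_left
          exact hXK (Finset.eq_of_subset_of_card_le h2 (by omega)).symm
        have : (X ∩ K).card ≤ k - 1 := by omega
        have := (Nat.cast_le (α := ℝ)).mpr this
        rwa [Nat.cast_sub hk.le, Nat.cast_one] at this
      have hXu : ((X ∩ u).card : ℝ) ≤ (k : ℝ) := by
        have : (X ∩ u).card ≤ k := hX ▸ Finset.card_le_card Finset.inter_subset_left
        exact_mod_cast this
      have hKu : (k : ℝ) - 1 ≤ ((K ∩ u).card : ℝ) := by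
        have hsub : K ∩ K₁ ⊆ K ∩ u :=
          Finset.inter_subset_inter subset_rfl husub
        have := Finset.card_le_card hsub
        rw [hKK₁] at this
        have := (Nat.cast_le (α := ℝ)).mpr this
        rwa [Nat.cast_sub hk.le, Nat.cast_one] at this
      have hKK : ((K ∩ K).card : ℝ) = (k : ℝ) := by
        rw [Finset.inter_self, hKcard]
      rw [hKK]
      nlinarith [mul_le_mul_of_nonneg_left hXu hwu0,
        mul_le_mul_of_nonneg_left hXKcard hrpos.le,
        mul_le_mul_of_nonneg_left hKu hwu0]
  have hKdEc : minDistTo d Ec K ≤ minDistTo d Ec K₁ := by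
    have := (Set.ext_iff.mp (hiff (1+1) Ec hEcne) K).mp hKscEc
    exact this.2 K₁ hK₁card
  -- f u K ≤ minDistTo Ec K
  have hfuK_le : f u K ≤ minDistTo d Ec K := by
    obtain ⟨E'', hE'', heq⟩ := aux_minDistTo_attained17 d Ec hKne
    rw [heq, Fin.sum_univ_two]
    have h0 : Ec 0 = u := by rw [hEcdef]; norm_num
    have h1 : Ec 1 = K := by rw [hEcdef]; norm_num
    rw [h0, h1]
    have := hfle u K (E'' 0) (hE'' 0).1 (hE'' 0).2
    have hge := dnonneg K (E'' 1) hKne (hE'' 1).2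
    linarith
  -- minDistTo Ec K₁ ≤ C₁
  have hEcK₁ : minDistTo d Ec K₁ ≤ C₁ := by
    have hle := aux_minDistTo_le17 d Ec K₁ (fun i => if (i : ℕ) < 1 then u else v₁)
      (by intro i; split
          · exact ⟨husub, hune⟩
          · exact ⟨hv₁sub, hv₁ne⟩)
    rw [Fin.sum_univ_two] at hle
    have h0 : Ec 0 = u := by rw [hEcdef]; norm_num
    have h1 : Ec 1 = K := by rw [hEcdef]; norm_num
    rw [h0, h1] at hle
    norm_num at hle
    rw [drefl u hune, hv₁eq.symm] at hle
    linarith [hle]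
  have hfuK : f u K ≤ C₁ := le_trans hfuK_le (le_trans hKdEc hEcK₁)
  -- triangle: A ≤ α + f u K
  obtain ⟨vu, hvusub, hvune, hvueq⟩ := hfatt u K hKne
  have htri : A ≤ α + f u K := by
    have h1 : A ≤ d s vu := hAdef ▸ hfle s K vu hvusub hvune
    have h2 : d s vu ≤ d s u + d u vu := dtri s u vu hsne hune hvune
    rw [hueq.symm] at h2
    rw [hvueq]
    linarith
  have hub2 : A - α ≤ C₁ := by linarith
  -- final contradiction
  nlinarith [mul_le_mul_of_nonneg_left hub2 hrpos.le,
    mul_pos (by linarith : (0:ℝ) < 1 - r) hC₁pos]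
end
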